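/- If there exists z = (z_2,…,z_n) ∈ ℤ_{≥0}^{n-1} satisfying the resonance condition z_2ρ_2 + ⋯ + z_nρ_n = M and z_2 + ⋯ + z_n ≤ M, then there exists a nonzero base function of degree M, i.e., a nonzero homogeneous polynomial P of degree M in y_1,…,y_n with ∂(D_+P)/∂y_1 = 0. -/

import Mathlib

open MvPolynomial

/-- The right-hand side of system (4.1): `ẏ₁ = -y₁² + φ₁`,
`ẏᵢ = (ρᵢ - 1) y₁ yᵢ + φᵢ` for `i ≠ 1`. -/
noncomputable def rhs41 (n : ℕ) [NeZero n] (ρ : Fin n → ℂ)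
    (φ : Fin n → MvPolynomial (Fin n) ℂ) (i : Fin n) : MvPolynomial (Fin n) ℂ :=
  if i = 0 then -(X 0) ^ 2 + φ 0 else C (ρ i - 1) * X 0 * X i + φ i

/-- The derivation `D₊` associated with system (4.1), as a linear map. -/
noncomputable def dplus41 (n : ℕ) [NeZero n] (ρ : Fin n → ℂ)
    (φ : Fin n → MvPolynomial (Fin n) ℂ) :
    MvPolynomial (Fin n) ℂ →ₗ[ℂ] MvPolynomial (Fin n) ℂ :=
  ∑ i : Fin n, (LinearMap.mulLeft ℂ (rhs41 n ρ φ i)).comp (pderiv i).toLinearMap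

theorem coeff_pderiv' {σ R : Type*} [CommSemiring R] [DecidableEq σ] (i : σ)
    (p : MvPolynomial σ R) (m : σ →₀ ℕ) :
    coeff m (pderiv i p) = (m i + 1 : ℕ) * coeff (m + Finsupp.single i 1) p := by
  induction p using MvPolynomial.induction_on' with
  | add p q hp hq => simp [hp, hq, mul_add]
  | monomial d a =>
    rw [pderiv_monomial, coeff_monomial, coeff_monomial]
    by_cases h : Finsupp.single i 1 ≤ d
    · have hd : d - Finsupp.single i 1 = m ↔ d = m + Finsupp.single i 1 := by
        constructor
        · rintro rfl; exact (tsub_add_cancel_of_le h).symm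
        · rintro rfl; simp
      by_cases h2 : d = m + Finsupp.single i 1
      · rw [if_pos (hd.mpr h2), if_pos h2, h2]
        simp [mul_comm]
      · rw [if_neg (fun hh => h2 (hd.mp hh)), if_neg h2, mul_zero]
    · have hdi : d i = 0 := by
        by_contra hdi
        exact h (Finsupp.single_le_iff.mpr (Nat.one_le_iff_ne_zero.mpr hdi))
      have h2 : d ≠ m + Finsupp.single i 1 := by
        intro hh
        apply h
        rw [hh]
        exact le_add_self
      rw [if_neg h2, mul_zero, hdi]
      split <;> simp

theorem degree_fin' {σ : Type*} [Fintype σ] (d : σ →₀ ℕ) : d.degree = ∑ i, d i := by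
  rw [Finsupp.degree]
  exact Finset.sum_subset (Finset.subset_univ _) (fun i _ hi => Finsupp.notMem_support_iff.mp hi)

theorem degree_add' {σ : Type*} [Fintype σ] (d e : σ →₀ ℕ) :
    (d + e).degree = d.degree + e.degree := by
  rw [degree_fin', degree_fin', degree_fin']
  simp [Finset.sum_add_distrib]

theorem degree_single' {σ : Type*} [Fintype σ] [DecidableEq σ] (i : σ) (k : ℕ) :
    (Finsupp.single i k).degree = k := by
  rw [degree_fin']
  simp [Finsupp.single_apply]

theorem coeff_eq_zero_of_pderiv_zero' {σ : Type*} [DecidableEq σ] {p : MvPolynomial σ ℂ} {i : σ}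
    (hp : pderiv i p = 0) {e : σ →₀ ℕ} (he : e i ≠ 0) : coeff e p = 0 := by
  have h1 : Finsupp.single i 1 ≤ e := Finsupp.single_le_iff.mpr (Nat.one_le_iff_ne_zero.mpr he)
  have h2 := coeff_pderiv' i p (e - Finsupp.single i 1)
  rw [hp, tsub_add_cancel_of_le h1, coeff_zero] at h2
  rw [Finsupp.tsub_apply, Finsupp.single_eq_same] at h2
  have h5 : (e i - 1) + 1 = e i := by omega
  rw [h5] at h2
  have : ((e i : ℕ) : ℂ) ≠ 0 := Nat.cast_ne_zero.mpr he
  exact (mul_eq_zero.mp h2.symm).resolve_left this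

theorem degree_eq_weight_one' {σ : Type*} :
    Finsupp.degree (σ := σ) = Finsupp.weight (1 : σ → ℕ) :=
  Finsupp.degree_eq_weight_one (R := ℕ)

theorem pderiv_isHomogeneous' {σ : Type*} [Fintype σ] [DecidableEq σ] {p : MvPolynomial σ ℂ}
    {m : ℕ} (i : σ) (hp : p.IsHomogeneous (m + 1)) : (pderiv i p).IsHomogeneous m := by
  intro d hd
  rw [coeff_pderiv'] at hd
  have h2 : coeff (d + Finsupp.single i 1) p ≠ 0 := by
    intro h; rw [h, mul_zero] at hd; exact hd rfl
  have h3 := hp h2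
  rw [← degree_eq_weight_one', degree_add', degree_single'] at h3
  rw [← degree_eq_weight_one']
  omega

theorem pderiv_of_isHomogeneous_zero {σ : Type*} [Fintype σ] [DecidableEq σ]
    {p : MvPolynomial σ ℂ} (i : σ) (hp : p.IsHomogeneous 0) : pderiv i p = 0 := by
  ext d
  rw [coeff_pderiv', coeff_zero]
  rw [hp.coeff_eq_zero (by rw [degree_add', degree_single']; omega), mul_zero]

theorem X_mul_monomial' {σ R : Type*} [CommSemiring R] (i : σ) (s : σ →₀ ℕ) (a : R) :
    (X i : MvPolynomial σ R) * monomial s a = monomial (s + Finsupp.single i 1) a := by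
  rw [X, monomial_mul, one_mul, add_comm]

theorem coeff_phi_mul {σ : Type*} [DecidableEq σ] {φ0 : MvPolynomial σ ℂ} {i : σ}
    (hφ0 : pderiv i φ0 = 0) (g e : σ →₀ ℕ) (hg : g i < e i) (c : ℂ) :
    coeff e (φ0 * monomial g c) = 0 := by
  rw [coeff_mul_monomial']
  split
  · rw [coeff_eq_zero_of_pderiv_zero' hφ0 (by rw [Finsupp.tsub_apply]; omega), zero_mul]
  · rfl

theorem coeff_q0 {n : ℕ} [NeZero n] (φ0 : MvPolynomial (Fin n) ℂ)
    (hφ0 : pderiv (0 : Fin n) φ0 = 0) (d e : Fin n →₀ ℕ) (hde : d 0 ≤ e 0) :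
    coeff e (pderiv (0:Fin n) ((-(X 0) ^ 2 + φ0) * monomial (d - Finsupp.single 0 1) ((d 0 : ℂ)))) =
      if e = d then -((d 0 : ℂ) * ((d 0 : ℂ) + 1)) else 0 := by
  by_cases hd0 : d 0 = 0
  · simp [hd0, monomial_zero]
  -- now d 0 ≥ 1
  have hle : Finsupp.single (0:Fin n) 1 ≤ d :=
    Finsupp.single_le_iff.mpr (Nat.one_le_iff_ne_zero.mpr hd0)
  have hg0 : (d - Finsupp.single (0:Fin n) 1 : Fin n →₀ ℕ) 0 = d 0 - 1 := by
    rw [Finsupp.tsub_apply, Finsupp.single_eq_same]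
  have hcan : d - Finsupp.single (0:Fin n) 1 + Finsupp.single 0 1 = d := tsub_add_cancel_of_le hle
  rw [pderiv_mul, map_add, hφ0, add_zero, map_neg, sq, pderiv_mul, pderiv_X_self,
    pderiv_monomial, hg0]
  -- now : (-(1 * X 0 + X 0 * 1)) * monomial (d - e₀) (d 0)
  --     + (-(X 0)^2 + φ0) * monomial (d - e₀ - e₀) ((d 0 : ℂ) * (d 0 - 1 : ℕ))
  rw [one_mul, mul_one, neg_mul, add_mul, X_mul_monomial', hcan, add_mul, neg_mul, mul_assoc,
    X_mul_monomial', X_mul_monomial']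
  rw [coeff_add, coeff_neg, coeff_add, coeff_add, coeff_neg, coeff_monomial, coeff_monomial]
  rw [coeff_phi_mul hφ0 _ _ (by rw [Finsupp.tsub_apply, Finsupp.tsub_apply]; simp; omega) _]
  by_cases he : e = d
  · subst he
    by_cases hd1 : e 0 = 1
    · rw [if_pos rfl, hd1]
      norm_num
    · have hle2 : Finsupp.single (0:Fin n) 1 ≤ e - Finsupp.single 0 1 :=
        Finsupp.single_le_iff.mpr (by omega)
      have hcan2 : e - Finsupp.single (0:Fin n) 1 - Finsupp.single 0 1 + Finsupp.single 0 1
          + Finsupp.single 0 1 = e := by rw [tsub_add_cancel_of_le hle2, hcan]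
      rw [if_pos rfl, if_pos hcan2, if_pos rfl, Nat.cast_sub (by omega : 1 ≤ e 0)]
      push_cast
      ring
  · rw [if_neg (fun h => he h.symm), if_neg he]
    by_cases hd1 : d 0 = 1
    · rw [hd1]
      norm_num
    · have hle2 : Finsupp.single (0:Fin n) 1 ≤ d - Finsupp.single 0 1 :=
        Finsupp.single_le_iff.mpr (by omega)
      have hcan2 : d - Finsupp.single (0:Fin n) 1 - Finsupp.single 0 1 + Finsupp.single 0 1
          + Finsupp.single 0 1 = d := by rw [tsub_add_cancel_of_le hle2, hcan]
      rw [if_neg (fun h => he (by rw [← h, hcan2]))]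
      simp

theorem coeff_qi {n : ℕ} [NeZero n] (a : ℂ) (φi : MvPolynomial (Fin n) ℂ)
    (hφi : pderiv (0 : Fin n) φi = 0) (i : Fin n) (hi : i ≠ 0) (d e : Fin n →₀ ℕ)
    (hde : d 0 ≤ e 0) :
    coeff e (pderiv (0:Fin n) ((C a * X 0 * X i + φi) * monomial (d - Finsupp.single i 1) ((d i : ℂ)))) =
      if e = d then a * (d i) * ((d 0 : ℂ) + 1) else 0 := by
  by_cases hdi : d i = 0
  · simp [hdi]
  have hgi : (d - Finsupp.single i 1 : Fin n →₀ ℕ) 0 = d 0 := by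
    rw [Finsupp.tsub_apply, Finsupp.single_eq_of_ne (Ne.symm hi)]
    omega
  have hcani : d - Finsupp.single i 1 + Finsupp.single i 1 = d :=
    tsub_add_cancel_of_le (Finsupp.single_le_iff.mpr (Nat.one_le_iff_ne_zero.mpr hdi))
  rw [pderiv_mul, map_add, hφi, add_zero, pderiv_mul, pderiv_mul, pderiv_X_self,
    pderiv_X_of_ne hi, pderiv_C, pderiv_monomial, hgi]
  rw [zero_mul, zero_add, mul_one, mul_zero, add_zero]
  -- now : (C a * X i) * monomial (d - eᵢ) ↑(d i)
  --     + (C a * X 0 * X i + φi) * monomial (d - eᵢ - e₀) (↑(d i) * ↑(d 0))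
  rw [mul_assoc (C a), X_mul_monomial', C_mul_monomial, hcani, add_mul,
    mul_assoc (C a * X 0), X_mul_monomial', mul_assoc (C a), X_mul_monomial', C_mul_monomial]
  rw [coeff_add, coeff_add, coeff_monomial, coeff_monomial]
  by_cases hd0 : d 0 = 0
  · have hz : ((d 0 : ℕ) : ℂ) = 0 := by rw [hd0]; norm_num
    rw [hz, mul_zero, mul_zero]
    simp only [monomial_zero, mul_zero, coeff_zero, add_zero, ite_self, zero_add]
    by_cases he : e = d
    · subst he
      rw [if_pos rfl, if_pos rfl]
      ring
    · rw [if_neg (fun h => he h.symm), if_neg he]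
  · rw [coeff_phi_mul hφi _ _ (by
      rw [Finsupp.tsub_apply, Finsupp.tsub_apply, Finsupp.single_eq_of_ne (Ne.symm hi),
        Finsupp.single_eq_same]
      omega) _]
    have hA : Finsupp.single i 1 ≤ d - Finsupp.single 0 1 :=
      Finsupp.single_le_iff.mpr
        (by rw [Finsupp.tsub_apply, Finsupp.single_eq_of_ne hi]; omega)
    have hcan3 : d - Finsupp.single i 1 - Finsupp.single 0 1 + Finsupp.single i 1
        + Finsupp.single 0 1 = d := by
      rw [tsub_right_comm, tsub_add_cancel_of_le hA,
        tsub_add_cancel_of_le (Finsupp.single_le_iff.mpr (by omega))]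
    by_cases he : e = d
    · subst he
      rw [if_pos rfl, if_pos hcan3, if_pos rfl]
      ring
    · rw [if_neg (fun h => he h.symm), if_neg (fun h => he (by rw [← h, hcan3])), if_neg he]
      norm_num

theorem coeff_L {n : ℕ} [NeZero n] (ρ : Fin n → ℂ) (φ : Fin n → MvPolynomial (Fin n) ℂ)
    (hφ0 : ∀ i, pderiv (0 : Fin n) (φ i) = 0) (d e : Fin n →₀ ℕ) (hde : d 0 ≤ e 0) :
    coeff e (pderiv (0:Fin n) (dplus41 n ρ φ (monomial d 1))) =
      if e = d then ((d 0 : ℂ) + 1) *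
        ((∑ i ∈ Finset.univ.erase 0, (d i : ℂ) * (ρ i - 1)) - (d 0 : ℂ)) else 0 := by
  rw [dplus41, LinearMap.sum_apply, map_sum, coeff_sum]
  simp only [LinearMap.comp_apply, Derivation.coeFn_coe, LinearMap.mulLeft_apply,
    pderiv_monomial, one_mul]
  rw [← Finset.add_sum_erase _ _ (Finset.mem_univ (0 : Fin n))]
  have h0 : coeff e (pderiv (0:Fin n)
      (rhs41 n ρ φ 0 * monomial (d - Finsupp.single 0 1) ((d 0 : ℂ)))) =
      if e = d then -((d 0 : ℂ) * ((d 0 : ℂ) + 1)) else 0 := by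
    rw [rhs41, if_pos rfl]
    exact coeff_q0 (φ 0) (hφ0 0) d e hde
  have hrest : ∀ i ∈ Finset.univ.erase (0 : Fin n),
      coeff e (pderiv (0:Fin n)
        (rhs41 n ρ φ i * monomial (d - Finsupp.single i 1) ((d i : ℂ)))) =
      if e = d then (ρ i - 1) * (d i) * ((d 0 : ℂ) + 1) else 0 := by
    intro i hi
    have hine : i ≠ 0 := Finset.ne_of_mem_erase hi
    rw [rhs41, if_neg hine]
    exact coeff_qi (ρ i - 1) (φ i) (hφ0 i) i hine d e hde
  rw [h0, Finset.sum_congr rfl hrest]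
  by_cases he : e = d
  · simp only [if_pos he]
    rw [← Finset.sum_mul]
    have hc : (∑ i ∈ Finset.univ.erase (0:Fin n), (ρ i - 1) * (d i : ℂ)) =
        ∑ i ∈ Finset.univ.erase (0:Fin n), (d i : ℂ) * (ρ i - 1) :=
      Finset.sum_congr rfl (fun i _ => mul_comm _ _)
    rw [hc]
    ring
  · simp only [if_neg he, Finset.sum_const_zero, add_zero]

/-- Corollary 8: if a resonance condition `z₂ρ₂ + ⋯ + zₙρₙ = M`, `|z| ≤ M`
holds for some tuple of nonnegative integers `z`, then there exists a nonzero
base function of degree `M`. -/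
theorem exists_base_function_of_resonance
    (n : ℕ) [NeZero n] (ρ : Fin n → ℂ)
    (φ : Fin n → MvPolynomial (Fin n) ℂ)
    (hφhom : ∀ i, (φ i).IsHomogeneous 2)
    (hφ0 : ∀ i, pderiv (0 : Fin n) (φ i) = 0)
    (M : ℕ)
    (hres : ∃ z : Fin n → ℕ, z 0 = 0 ∧
      (∑ i, (z i : ℂ) * ρ i) = (M : ℂ) ∧ (∑ i, z i) ≤ M) :
    ∃ P : MvPolynomial (Fin n) ℂ, P ≠ 0 ∧ P.IsHomogeneous M ∧
      pderiv (0 : Fin n) (dplus41 n ρ φ P) = 0 := by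
  obtain ⟨z, hz0, hzρ, hzM⟩ := hres
  set K : ℕ := ∑ i, z i with hK
  set j : ℕ := M - K with hj
  have hKj : K + j = M := by omega
  set d₀ : Fin n →₀ ℕ := Finsupp.equivFunOnFinite.symm z + Finsupp.single 0 j with hd₀
  have hd₀0 : d₀ 0 = j := by
    simp [hd₀, hz0]
  have hd₀i : ∀ i : Fin n, i ≠ 0 → d₀ i = z i := by
    intro i hi
    simp [hd₀, Finsupp.single_eq_of_ne hi]
  have hd₀deg : d₀.degree = M := by
    rw [hd₀, degree_add', degree_single', degree_fin']
    have h : ∀ i : Fin n, (Finsupp.equivFunOnFinite.symm z) i = z i := fun i => rfl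
    rw [Finset.sum_congr rfl fun i _ => h i, ← hK]
    exact hKj
  -- the diagonal eigenvalue at d₀ vanishes
  have hdiag : ((d₀ 0 : ℂ) + 1) *
      ((∑ i ∈ Finset.univ.erase 0, (d₀ i : ℂ) * (ρ i - 1)) - (d₀ 0 : ℂ)) = 0 := by
    have h1 : (∑ i ∈ Finset.univ.erase (0:Fin n), (d₀ i : ℂ) * (ρ i - 1)) =
        ∑ i ∈ Finset.univ.erase (0:Fin n), (z i : ℂ) * (ρ i - 1) :=
      Finset.sum_congr rfl fun i hi => by rw [hd₀i i (Finset.ne_of_mem_erase hi)]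
    have h2 : (∑ i ∈ Finset.univ.erase (0:Fin n), (z i : ℂ) * (ρ i - 1)) =
        ∑ i, (z i : ℂ) * (ρ i - 1) := by
      rw [← Finset.add_sum_erase _ (fun i => (z i : ℂ) * (ρ i - 1)) (Finset.mem_univ 0), hz0]
      simp
    have h3 : (∑ i, (z i : ℂ) * (ρ i - 1)) = (M : ℂ) - K := by
      have h4 : (∑ i, (z i : ℂ) * (ρ i - 1)) =
          (∑ i, (z i : ℂ) * ρ i) - (∑ i, (z i : ℂ)) := by
        rw [← Finset.sum_sub_distrib]
        exact Finset.sum_congr rfl fun i _ => by ring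
      rw [h4, hzρ, hK, Nat.cast_sum]
    have h5 : (M : ℂ) = (K : ℂ) + (j : ℂ) := by exact_mod_cast hKj.symm
    rw [hd₀0, h1, h2, h3, h5]
    ring
  -- the operator
  set Lmap : MvPolynomial (Fin n) ℂ →ₗ[ℂ] MvPolynomial (Fin n) ℂ :=
    ((pderiv (0:Fin n) : Derivation ℂ _ _) : MvPolynomial (Fin n) ℂ →ₗ[ℂ] MvPolynomial (Fin n) ℂ).comp
      (dplus41 n ρ φ) with hLmap
  have hLapp : ∀ p, Lmap p = pderiv (0:Fin n) (dplus41 n ρ φ p) := fun p => rfl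
  -- homogeneity of polynomials in the image
  have hrhs : ∀ i, (rhs41 n ρ φ i).IsHomogeneous 2 := by
    intro i
    rw [rhs41]
    split
    · have hsq : (X 0 ^ 2 : MvPolynomial (Fin n) ℂ) = X 0 * X 0 := sq (X 0)
      rw [hsq]
      exact ((isHomogeneous_X ℂ 0).mul (isHomogeneous_X ℂ 0)).neg.add (hφhom 0)
    · refine IsHomogeneous.add ?_ (hφhom i)
      rw [mul_assoc]
      exact ((isHomogeneous_X ℂ 0).mul (isHomogeneous_X ℂ i)).C_mul _
  have hdplus : ∀ p : MvPolynomial (Fin n) ℂ, p.IsHomogeneous M →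
      (dplus41 n ρ φ p).IsHomogeneous (M + 1) := by
    intro p hp
    rw [dplus41, LinearMap.sum_apply]
    apply IsHomogeneous.sum
    intro i _
    simp only [LinearMap.comp_apply, Derivation.coeFn_coe, LinearMap.mulLeft_apply]
    cases M with
    | zero =>
      rw [pderiv_of_isHomogeneous_zero i hp, mul_zero]
      exact isHomogeneous_zero _ _ _
    | succ m =>
      have h := (pderiv_isHomogeneous' i hp).mul (hrhs i)
      rw [mul_comm] at h
      have : m + 2 = m + 1 + 1 := rfl
      rwa [this] at h
  have hLhom : ∀ p : MvPolynomial (Fin n) ℂ, p.IsHomogeneous M →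
      (Lmap p).IsHomogeneous M := by
    intro p hp
    rw [hLapp]
    exact pderiv_isHomogeneous' 0 (hdplus p hp)
  -- the invariant subspace
  set S : Set (Fin n →₀ ℕ) := {d | d.degree = M ∧ d 0 ≤ j} with hS
  have hSfin : S.Finite := (Finsupp.finite_of_degree_le M).subset fun d hd => le_of_eq hd.1
  set W : Submodule ℂ (MvPolynomial (Fin n) ℂ) :=
    Submodule.span ℂ ((fun d => (monomial d (1:ℂ))) '' S) with hW
  haveI : FiniteDimensional ℂ W := FiniteDimensional.span_of_finite ℂ (hSfin.image _)
  have hWhom : ∀ p ∈ W, p.IsHomogeneous M := by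
    intro p hp
    have hle : W ≤ homogeneousSubmodule (Fin n) ℂ M := by
      rw [hW]
      apply Submodule.span_le.mpr
      rintro q ⟨d, hd, rfl⟩
      exact isHomogeneous_monomial 1 hd.1
    exact hle hp
  have hd₀S : d₀ ∈ S := ⟨hd₀deg, le_of_eq hd₀0⟩
  have hm₀W : (monomial d₀ (1:ℂ)) ∈ W := Submodule.subset_span ⟨d₀, hd₀S, rfl⟩
  -- W is invariant under Lmap
  have hgen : ∀ d ∈ S, Lmap (monomial d 1) ∈ W := by
    intro d hd
    have hhom : (Lmap (monomial d 1)).IsHomogeneous M :=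
      hLhom _ (isHomogeneous_monomial 1 hd.1)
    rw [as_sum (Lmap (monomial d 1))]
    apply Submodule.sum_mem
    intro e he
    have hcoeff : coeff e (Lmap (monomial d 1)) ≠ 0 := mem_support_iff.mp he
    have hdeg : e.degree = M := by
      have h := hhom hcoeff
      rwa [← degree_eq_weight_one'] at h
    have he0 : e 0 ≤ j := by
      by_contra hlt
      push_neg at hlt
      have hne : e ≠ d := fun h => (not_lt.mpr hd.2) (h ▸ hlt)
      have hc := coeff_L ρ φ hφ0 d e (le_trans hd.2 (le_of_lt hlt))
      rw [if_neg hne, ← hLapp] at hc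
      exact hcoeff hc
    have heq : (monomial e (coeff e (Lmap (monomial d 1))) : MvPolynomial (Fin n) ℂ) =
        coeff e (Lmap (monomial d 1)) • monomial e 1 := by
      rw [smul_monomial, smul_eq_mul, mul_one]
    rw [heq]
    exact Submodule.smul_mem _ _ (Submodule.subset_span ⟨e, ⟨hdeg, he0⟩, rfl⟩)
  have hLW : ∀ p ∈ W, Lmap p ∈ W := by
    intro p hp
    refine Submodule.span_induction ?_ ?_ ?_ ?_ hp
    · rintro x ⟨d, hd, rfl⟩
      exact hgen d hd
    · rw [map_zero]; exact zero_mem _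
    · intro x y _ _ ihx ihy
      rw [map_add]; exact add_mem ihx ihy
    · intro a x _ ih
      rw [map_smul]; exact Submodule.smul_mem _ _ ih
  -- the coordinate functional at d₀ kills Lmap on W
  have hfun : ∀ p ∈ W, coeff d₀ (Lmap p) = 0 := by
    intro p hp
    refine Submodule.span_induction ?_ ?_ ?_ ?_ hp
    · rintro x ⟨d, hd, rfl⟩
      by_cases hdd : d = d₀
      · subst hdd
        rw [hLapp, coeff_L ρ φ hφ0 d₀ d₀ (le_refl _), if_pos rfl]
        exact hdiag
      · rw [hLapp, coeff_L ρ φ hφ0 d d₀ (hd₀0 ▸ hd.2), if_neg (fun h => hdd h.symm)]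
    · rw [map_zero, coeff_zero]
    · intro x y _ _ ihx ihy
      rw [map_add, coeff_add, ihx, ihy, add_zero]
    · intro a x _ ih
      rw [map_smul, coeff_smul, ih, smul_zero]
  -- the restricted map is not injective
  have hnotinj : ¬ Function.Injective (Lmap.restrict hLW) := by
    intro hinj
    obtain ⟨w, hw⟩ := LinearMap.injective_iff_surjective.mp hinj ⟨monomial d₀ 1, hm₀W⟩
    have h2 : Lmap w.1 = monomial d₀ 1 := congrArg Subtype.val hw
    have h1 : coeff d₀ (Lmap w.1) = 0 := hfun w.1 w.2
    rw [h2, coeff_monomial, if_pos rfl] at h1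
    exact one_ne_zero h1
  obtain ⟨x, y, hxy, hne⟩ := Function.not_injective_iff.mp hnotinj
  refine ⟨((x - y : W) : MvPolynomial (Fin n) ℂ), ?_, ?_, ?_⟩
  · intro h
    exact hne (sub_eq_zero.mp ((Submodule.coe_eq_zero).mp h))
  · exact hWhom _ (x - y).2
  · have h3 : Lmap.restrict hLW (x - y) = 0 := by
      rw [map_sub, hxy, sub_self]
    have h4 : Lmap ((x - y : W) : MvPolynomial (Fin n) ℂ) = 0 := congrArg Subtype.val h3
    rw [← hLapp]
    exact h4
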